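/- Let Γ be a countable group acting on a countably infinite set I, and let (X₀, μ₀) be a probability space with an atom (a point of positive measure) and with at least two points in its support. The generalized Bernoulli action Γ ↷ (X₀, μ₀)^I is essentially free if and only if every g ≠ e in Γ moves infinitely many elements of I. -/

import Mathlib

open MeasureTheory

lemma box_inter {I X₀ : Type*} [DecidableEq I] (t u : Finset I) (A B : I → Set X₀) :
    ({x : I → X₀ | ∀ i ∈ t, x i ∈ A i} ∩ {x | ∀ i ∈ u, x i ∈ B i}) =
      {x | ∀ i ∈ t ∪ u, x i ∈ (if i ∈ t then A i else Set.univ) ∩ (if i ∈ u then B i else Set.univ)} := by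
  ext x
  simp only [Set.mem_inter_iff, Set.mem_setOf_eq, Finset.mem_union]
  constructor
  · rintro ⟨h1, h2⟩ i hi
    constructor
    · split_ifs with h
      · exact h1 i h
      · trivial
    · split_ifs with h
      · exact h2 i h
      · trivial
  · intro h
    constructor
    · intro i hi
      have := (h i (Or.inl hi)).1
      rwa [if_pos hi] at this
    · intro i hi
      have := (h i (Or.inr hi)).2
      rwa [if_pos hi] at this

lemma measurableSet_box {I X₀ : Type*} [MeasurableSpace X₀] (t : Finset I) (A : I → Set X₀)
    (hA : ∀ i, MeasurableSet (A i)) :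
    MeasurableSet {x : I → X₀ | ∀ i ∈ t, x i ∈ A i} := by
  have h : {x : I → X₀ | ∀ i ∈ t, x i ∈ A i} = ⋂ i ∈ t, (fun x : I → X₀ => x i) ⁻¹' A i := by
    ext x; simp
  rw [h]
  exact MeasurableSet.biInter t.countable_toSet (fun i _ => (measurable_pi_apply i) (hA i))

def bernoulliBoxes (I X₀ : Type*) [MeasurableSpace X₀] : Set (Set (I → X₀)) :=
  {S | ∃ (t : Finset I) (A : I → Set X₀), (∀ i, MeasurableSet (A i)) ∧
    S = {x | ∀ i ∈ t, x i ∈ A i}}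

lemma isPiSystem_bernoulliBoxes (I X₀ : Type*) [MeasurableSpace X₀] :
    IsPiSystem (bernoulliBoxes I X₀) := by
  classical
  rintro S ⟨t, A, hA, rfl⟩ T ⟨u, B, hB, rfl⟩ -
  refine ⟨t ∪ u, fun i => (if i ∈ t then A i else Set.univ) ∩ (if i ∈ u then B i else Set.univ),
    fun i => ?_, box_inter t u A B⟩
  refine MeasurableSet.inter ?_ ?_ <;> split_ifs <;> first | exact hA _ | exact hB _ |
    exact MeasurableSet.univ

lemma generateFrom_bernoulliBoxes (I X₀ : Type*) [MeasurableSpace X₀] [Countable I] :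
    (MeasurableSpace.pi : MeasurableSpace (I → X₀)) =
      MeasurableSpace.generateFrom (bernoulliBoxes I X₀) := by
  refine le_antisymm ?_ ?_
  · rw [MeasurableSpace.pi]
    refine iSup_le fun i => ?_
    rintro S ⟨A, hA, rfl⟩
    refine MeasurableSpace.measurableSet_generateFrom ⟨{i}, fun _ => A, fun _ => hA, ?_⟩
    ext x; simp
  · refine MeasurableSpace.generateFrom_le ?_
    rintro S ⟨t, A, hA, rfl⟩
    exact measurableSet_box t A hA

lemma sum_prod_fin_bool (K : ℕ) (f : Bool → ENNReal) :
    ∑ ε : Fin K → Bool, ∏ k, f (ε k) = (∑ b, f b) ^ K := by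
  induction K with
  | zero => simp
  | succ n ih =>
    rw [← Equiv.sum_comp (Fin.consEquiv fun _ => Bool) (fun ε => ∏ k, f (ε k)),
      Fintype.sum_prod_type]
    simp only [Fin.consEquiv_apply, Fin.prod_univ_succ, Fin.cons_zero, Fin.cons_succ]
    rw [pow_succ]
    calc ∑ b : Bool, ∑ ε : Fin n → Bool, f b * ∏ k, f (ε k)
        = ∑ b : Bool, f b * ∑ ε : Fin n → Bool, ∏ k, f (ε k) := by
          simp [Finset.mul_sum]
      _ = (∑ b, f b) * (∑ b, f b) ^ n := by rw [← Finset.sum_mul, ih]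
      _ = (∑ b, f b) ^ n * (∑ b, f b) := mul_comm _ _

set_option maxHeartbeats 1000000 in
/-- For a countable group `Γ` acting on a countably infinite set `I` and a
base probability space `(X₀, μ₀)` having an atom and at least two points in its support,
the generalized Bernoulli action `Γ ↷ (X₀, μ₀)^I` is essentially free if and only if
every `g ≠ e` moves infinitely many elements of `I`. -/
theorem generalized_bernoulli_essentially_free_iff_atomic
    {Γ : Type*} [Group Γ] [Countable Γ]
    {I : Type*} [Countable I] [Infinite I] [MulAction Γ I]
    {X₀ : Type*} [MeasurableSpace X₀] (μ₀ : Measure X₀) [IsProbabilityMeasure μ₀]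
    (hatom : ∃ a : X₀, 0 < μ₀ {a})
    (htwopoints : ∀ a : X₀, μ₀ {a} < 1)
    (μ : Measure (I → X₀)) [IsProbabilityMeasure μ]
    (hμ : ∀ (s : Finset I) (A : I → Set X₀), (∀ i, MeasurableSet (A i)) →
      μ {x | ∀ i ∈ s, x i ∈ A i} = ∏ i ∈ s, μ₀ (A i)) :
    (∀ g : Γ, g ≠ 1 → μ {x : I → X₀ | ∀ i : I, x (g⁻¹ • i) = x i} = 0) ↔
    (∀ g : Γ, g ≠ 1 → {i : I | g • i ≠ i}.Infinite) := by
  constructor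
  · intro hfree
    classical
    obtain ⟨a, ha⟩ := hatom
    set E : Set X₀ := toMeasurable μ₀ {a} with hEdef
    have hE : MeasurableSet E := measurableSet_toMeasurable μ₀ _
    have hEm : μ₀ E = μ₀ {a} := measure_toMeasurable _
    have hm0 : 0 < μ₀ E := hEm ▸ ha
    have hkey : ∀ T : Set X₀, MeasurableSet T → μ₀ (E ∩ T) = if a ∈ T then μ₀ E else 0 := by
      intro T hT
      rw [hEdef, Measure.measure_toMeasurable_inter hT (measure_ne_top μ₀ _)]
      split_ifs with h
      · rw [Set.inter_eq_left.2 (Set.singleton_subset_iff.2 h), ← hEm, hEdef]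
      · rw [Set.singleton_inter_eq_empty.2 h, measure_empty]
    intro g hg
    by_contra hinf
    rw [Set.not_infinite] at hinf
    set s : Finset I := hinf.toFinset with hsdef
    set n : ℕ := s.card with hndef
    set r : (I → X₀) → (I → X₀) := fun x i => if i ∈ s then a else x i with hrdef
    have hrmeas : Measurable r := by
      refine measurable_pi_lambda _ (fun i => ?_)
      by_cases hi : i ∈ s
      · simpa [hrdef, hi] using measurable_const
      · simpa [hrdef, hi] using measurable_pi_apply i
    set D : Set (I → X₀) := {x | ∀ i ∈ s, x i ∈ E} with hDdef
    have hDmeas : MeasurableSet D := measurableSet_box s (fun _ => E) (fun _ => hE)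
    -- the key measure identity
    have hres : μ.restrict D = (μ₀ E ^ n) • μ.map r := by
      refine ext_of_generate_finite _ (generateFrom_bernoulliBoxes I X₀)
        (isPiSystem_bernoulliBoxes I X₀) ?_ ?_
      · rintro S ⟨t, A, hA, rfl⟩
        have hSmeas : MeasurableSet {x : I → X₀ | ∀ i ∈ t, x i ∈ A i} := measurableSet_box t A hA
        rw [Measure.restrict_apply hSmeas, hDdef, box_inter t s A (fun _ => E)]
        set C : I → Set X₀ :=
          fun i => (if i ∈ t then A i else Set.univ) ∩ (if i ∈ s then E else Set.univ) with hCdef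
        have hCmeas : ∀ i, MeasurableSet (C i) := by
          intro i
          refine MeasurableSet.inter ?_ ?_ <;> split_ifs <;>
            first | exact hA _ | exact hE | exact MeasurableSet.univ
        rw [hμ (t ∪ s) C hCmeas]
        rw [← Finset.sdiff_union_self_eq_union, Finset.prod_union Finset.sdiff_disjoint]
        have hprod_s : ∏ i ∈ s, μ₀ (C i) =
            ∏ i ∈ s, (if i ∈ t → a ∈ A i then μ₀ E else 0) := by
          refine Finset.prod_congr rfl fun i hi => ?_
          have hC : C i = (if i ∈ t then A i else Set.univ) ∩ E := by
            simp only [hCdef, if_pos hi]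
          rw [hC, Set.inter_comm,
            hkey _ (by split_ifs with h; exacts [hA _, MeasurableSet.univ])]
          congr 1
          by_cases hit : i ∈ t <;> simp [hit]
        have hprod_t : ∏ i ∈ t \ s, μ₀ (C i) = ∏ i ∈ t \ s, μ₀ (A i) := by
          refine Finset.prod_congr rfl fun i hi => ?_
          rw [Finset.mem_sdiff] at hi
          rw [hCdef]
          simp [hi.1, hi.2]
        rw [hprod_s, hprod_t, Measure.smul_apply, smul_eq_mul,
          Measure.map_apply hrmeas hSmeas]
        by_cases hall : ∀ i ∈ s, i ∈ t → a ∈ A i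
        · have h1 : ∏ i ∈ s, (if i ∈ t → a ∈ A i then μ₀ E else 0) = μ₀ E ^ n := by
            rw [hndef, ← Finset.prod_const]
            exact Finset.prod_congr rfl fun i hi => if_pos (hall i hi)
          have h2 : r ⁻¹' {x : I → X₀ | ∀ i ∈ t, x i ∈ A i} = {x | ∀ i ∈ t \ s, x i ∈ A i} := by
            ext x
            simp only [Set.mem_preimage, Set.mem_setOf_eq, hrdef, Finset.mem_sdiff]
            constructor
            · intro h i hi
              have := h i hi.1
              rwa [if_neg hi.2] at this
            · intro h i hi
              by_cases his : i ∈ s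
              · rw [if_pos his]; exact hall i his hi
              · rw [if_neg his]; exact h i ⟨hi, his⟩
          rw [h1, h2, hμ (t \ s) A hA, mul_comm]
        · push_neg at hall
          obtain ⟨i₀, hi₀s, hi₀t, hi₀a⟩ := hall
          have h1 : ∏ i ∈ s, (if i ∈ t → a ∈ A i then μ₀ E else 0) = 0 := by
            refine Finset.prod_eq_zero hi₀s ?_
            rw [if_neg]
            intro hcon
            exact hi₀a (hcon hi₀t)
          have h2 : r ⁻¹' {x : I → X₀ | ∀ i ∈ t, x i ∈ A i} = ∅ := by
            ext x
            simp only [Set.mem_preimage, Set.mem_setOf_eq, Set.mem_empty_iff_false, iff_false]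
            intro h
            have := h i₀ hi₀t
            rw [hrdef] at this
            simp only [if_pos hi₀s] at this
            exact hi₀a this
          rw [h1, h2, measure_empty, mul_zero, mul_zero]
      · rw [Measure.restrict_apply MeasurableSet.univ, Set.univ_inter, hDdef,
          hμ s (fun _ => E) (fun _ => hE), Finset.prod_const, Measure.smul_apply, smul_eq_mul,
          Measure.map_apply hrmeas MeasurableSet.univ, Set.preimage_univ, measure_univ, mul_one,
          hndef]
    -- the atom cylinder is inside the fixed-point set
    set Cset : Set (I → X₀) := {x | ∀ i ∈ s, x i = a} with hCsetdef
    have hsub : Cset ⊆ {x : I → X₀ | ∀ i : I, x (g⁻¹ • i) = x i} := by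
      intro x hx i
      by_cases hi : g • i = i
      · have h : g⁻¹ • i = i := by rw [inv_smul_eq_iff, hi]
        rw [h]
      · have h1 : i ∈ s := by
          rw [hsdef, Set.Finite.mem_toFinset]
          exact hi
        have h2 : g⁻¹ • i ∈ s := by
          rw [hsdef, Set.Finite.mem_toFinset]
          show g • (g⁻¹ • i) ≠ g⁻¹ • i
          rw [smul_inv_smul]
          intro hcon
          apply hi
          conv_lhs => rw [hcon]
          rw [smul_inv_smul]
        rw [hx _ h2, hx _ h1]
    have hlow : μ₀ E ^ n ≤ μ Cset := by
      have h0 : r ⁻¹' Cset = Set.univ := by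
        ext x
        simp only [Set.mem_preimage, hCsetdef, Set.mem_setOf_eq, Set.mem_univ, iff_true, hrdef]
        intro i hi
        rw [if_pos hi]
      calc μ₀ E ^ n = μ₀ E ^ n * μ (r ⁻¹' Cset) := by rw [h0, measure_univ, mul_one]
        _ ≤ μ₀ E ^ n * (μ.map r) Cset :=
            mul_le_mul_right (Measure.le_map_apply hrmeas.aemeasurable _) _
        _ = ((μ₀ E ^ n) • μ.map r) Cset := by rw [Measure.smul_apply, smul_eq_mul]
        _ = μ.restrict D Cset := by rw [hres]
        _ ≤ μ Cset := Measure.le_iff'.1 Measure.restrict_le_self _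
    have hfix := hfree g hg
    have : (0 : ENNReal) < μ {x : I → X₀ | ∀ i : I, x (g⁻¹ • i) = x i} :=
      lt_of_lt_of_le (lt_of_lt_of_le (ENNReal.pow_pos hm0 n) hlow) (measure_mono hsub)
    rw [hfix] at this
    exact lt_irrefl 0 this
  · intro hmove
    classical
    obtain ⟨a, ha⟩ := hatom
    set E : Set X₀ := toMeasurable μ₀ {a} with hEdef
    have hE : MeasurableSet E := measurableSet_toMeasurable μ₀ _
    have hEm : μ₀ E = μ₀ {a} := measure_toMeasurable _
    have hm0 : 0 < μ₀ E := hEm ▸ ha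
    have hm1 : μ₀ E < 1 := hEm ▸ htwopoints a
    have hEc : μ₀ Eᶜ = 1 - μ₀ E := by
      rw [measure_compl hE (measure_ne_top μ₀ E), measure_univ]
    intro g hg
    have hM : {i : I | g • i ≠ i}.Infinite := hmove g hg
    -- construct a sequence of disjoint pairs of moved indices
    set bad : List I → Set I := fun l =>
      (l.toFinset : Set I) ∪ (fun i => g • i) '' (l.toFinset : Set I)
        ∪ (fun i => g⁻¹ • i) '' (l.toFinset : Set I) with hbaddef
    have hbadfin : ∀ l, (bad l).Finite := by
      intro l
      exact (((l.toFinset.finite_toSet).union (l.toFinset.finite_toSet.image _)).union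
        (l.toFinset.finite_toSet.image _))
    set pick : List I → I := fun l => ((hM.diff (hbadfin l)).nonempty).some with hpickdef
    have hpickmem : ∀ l, pick l ∈ {i : I | g • i ≠ i} \ bad l := fun l =>
      ((hM.diff (hbadfin l)).nonempty).some_mem
    set L : ℕ → List I := fun n => Nat.rec [] (fun _ ih => pick ih :: ih) n with hLdef
    set p : ℕ → I := fun n => pick (L n) with hpdef
    have hLsucc : ∀ n, L (n + 1) = p n :: L n := fun n => rfl
    have hmemL : ∀ n k, k < n → p k ∈ L n := by
      intro n
      induction n with
      | zero => omega
      | succ n ih =>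
        intro k hk
        rw [hLsucc, List.mem_cons]
        rcases Nat.lt_succ_iff_lt_or_eq.1 hk with h | h
        · exact Or.inr (ih k h)
        · exact Or.inl (by rw [h])
    have hpmoved : ∀ n, g • p n ≠ p n := fun n => (hpickmem (L n)).1
    have hneq : ∀ {k l : ℕ}, l < k → p k ≠ p l ∧ p k ≠ g • p l ∧ p k ≠ g⁻¹ • p l := by
      intro k l hlk
      have hbad := (hpickmem (L k)).2
      rw [hbaddef] at hbad
      simp only [Set.mem_union, Set.mem_image, List.coe_toFinset, Set.mem_setOf_eq,
        not_or, not_exists, not_and] at hbad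
      have hmem : p l ∈ L k := hmemL k l hlk
      refine ⟨fun h => hbad.1.1 ?_, fun h => hbad.1.2 (p l) hmem h.symm,
        fun h => hbad.2 (p l) hmem h.symm⟩
      show p k ∈ L k
      exact h.symm ▸ hmem
    set q : ℕ → I := fun n => g⁻¹ • p n with hqdef
    have hpq_ne : ∀ n, p n ≠ q n := by
      intro n h
      apply hpmoved n
      conv_lhs => rw [h, hqdef]
      simp
    have hPinj : Function.Injective p := by
      intro k l h
      rcases lt_trichotomy k l with hc | hc | hc
      · exact absurd h.symm (hneq hc).1
      · exact hc
      · exact absurd h (hneq hc).1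
    have hPQ : ∀ k l, p k ≠ q l := by
      intro k l
      rcases lt_trichotomy k l with hc | hc | hc
      · intro h
        apply (hneq hc).2.1
        rw [hqdef] at h
        simp only at h
        rw [h, smul_inv_smul]
      · rw [hc]; exact hpq_ne l
      · exact (hneq hc).2.2
    have hQinj : Function.Injective q := by
      intro k l h
      apply hPinj
      have h2 : g • q k = g • q l := by rw [h]
      simpa [hqdef] using h2
    set Fix : Set (I → X₀) := {x : I → X₀ | ∀ i : I, x (g⁻¹ • i) = x i} with hFixdef
    have hbound : ∀ K : ℕ, μ Fix ≤ (μ₀ E * μ₀ E + μ₀ Eᶜ * μ₀ Eᶜ) ^ K := by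
      intro K
      set t : Finset I := (Finset.univ.image fun k : Fin K => p k) ∪
        (Finset.univ.image fun k : Fin K => q k) with htdef
      have hpt : ∀ k : Fin K, p k ∈ t :=
        fun k => Finset.mem_union_left _ (Finset.mem_image_of_mem _ (Finset.mem_univ k))
      have hqt : ∀ k : Fin K, q k ∈ t :=
        fun k => Finset.mem_union_right _ (Finset.mem_image_of_mem _ (Finset.mem_univ k))
      set Abox : (Fin K → Bool) → I → Set X₀ := fun ε i =>
        if ∃ k : Fin K, (i = p k ∨ i = q k) ∧ ε k = true then E else Eᶜ with hAdef
      have hAmeas : ∀ ε i, MeasurableSet (Abox ε i) := by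
        intro ε i
        rw [hAdef]
        simp only
        split_ifs
        · exact hE
        · exact hE.compl
      have hAp : ∀ (ε) (k : Fin K), Abox ε (p k) = if ε k = true then E else Eᶜ := by
        intro ε k
        have hcond : (∃ k' : Fin K, ((p (k : ℕ) : I) = p (k' : ℕ) ∨ (p (k : ℕ) : I) = q (k' : ℕ))
            ∧ ε k' = true) ↔ ε k = true := by
          constructor
          · rintro ⟨k', h | h, hε⟩
            · rwa [show k = k' from Fin.val_injective (hPinj h)]
            · exact absurd h (hPQ _ _)
          · intro h; exact ⟨k, Or.inl rfl, h⟩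
        rw [hAdef]
        simp only [hcond]
      have hAq : ∀ (ε) (k : Fin K), Abox ε (q k) = if ε k = true then E else Eᶜ := by
        intro ε k
        have hcond : (∃ k' : Fin K, ((q (k : ℕ) : I) = p (k' : ℕ) ∨ (q (k : ℕ) : I) = q (k' : ℕ))
            ∧ ε k' = true) ↔ ε k = true := by
          constructor
          · rintro ⟨k', h | h, hε⟩
            · exact absurd h.symm (hPQ _ _)
            · rwa [show k = k' from Fin.val_injective (hQinj h)]
          · intro h; exact ⟨k, Or.inr rfl, h⟩
        rw [hAdef]
        simp only [hcond]
      set Box : (Fin K → Bool) → Set (I → X₀) := fun ε => {x | ∀ i ∈ t, x i ∈ Abox ε i}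
        with hBoxdef
      have hsub : Fix ⊆ ⋃ ε : Fin K → Bool, Box ε := by
        intro x hx
        have hxpq : ∀ k : Fin K, x (q k) = x (p k) := fun k => hx (p k)
        refine Set.mem_iUnion.2 ⟨fun k => decide (x (p k) ∈ E), ?_⟩
        intro i hi
        rw [htdef, Finset.mem_union] at hi
        rcases hi with hi | hi
        · obtain ⟨k, -, rfl⟩ := Finset.mem_image.1 hi
          rw [hAp]
          by_cases hxk : x (p k) ∈ E <;> simp [hxk]
        · obtain ⟨k, -, rfl⟩ := Finset.mem_image.1 hi
          rw [hAq, hxpq k]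
          by_cases hxk : x (p k) ∈ E <;> simp [hxk]
      have hBoxmeas : ∀ ε, MeasurableSet (Box ε) := fun ε => measurableSet_box t _ (hAmeas ε)
      have hdisj : Pairwise (Function.onFun Disjoint Box) := by
        intro ε ε' hne
        obtain ⟨k, hk⟩ : ∃ k, ε k ≠ ε' k := by
          by_contra hcon
          push_neg at hcon
          exact hne (funext hcon)
        rw [Function.onFun, Set.disjoint_left]
        intro x hxε hxε'
        have h1 := hxε (p k) (hpt k)
        have h2 := hxε' (p k) (hpt k)
        rw [hAp] at h1 h2
        by_cases hbe : ε k = true <;> by_cases hbe' : ε' k = true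
        · exact hk (hbe.trans hbe'.symm)
        · rw [if_pos hbe] at h1
          rw [if_neg hbe'] at h2
          exact h2 h1
        · rw [if_neg hbe] at h1
          rw [if_pos hbe'] at h2
          exact h1 h2
        · rw [Bool.not_eq_true] at hbe hbe'
          exact hk (hbe.trans hbe'.symm)
      have hdisjt : Disjoint (Finset.univ.image fun k : Fin K => p k)
          (Finset.univ.image fun k : Fin K => q k) := by
        rw [Finset.disjoint_left]
        intro i hi1 hi2
        obtain ⟨k, -, rfl⟩ := Finset.mem_image.1 hi1
        obtain ⟨l, -, hl⟩ := Finset.mem_image.1 hi2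
        exact hPQ (k : ℕ) (l : ℕ) hl.symm
      have hμBox : ∀ ε, μ (Box ε) =
          ∏ k : Fin K, ((if ε k = true then μ₀ E else μ₀ Eᶜ) *
            (if ε k = true then μ₀ E else μ₀ Eᶜ)) := by
        intro ε
        rw [hBoxdef]
        simp only
        rw [hμ t (Abox ε) (hAmeas ε), htdef, Finset.prod_union hdisjt,
          Finset.prod_image (fun x _ y _ h => Fin.val_injective (hPinj h)),
          Finset.prod_image (fun x _ y _ h => Fin.val_injective (hQinj h)),
          ← Finset.prod_mul_distrib]
        refine Finset.prod_congr rfl fun k _ => ?_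
        rw [hAp, hAq, apply_ite μ₀]
      calc μ Fix ≤ μ (⋃ ε : Fin K → Bool, Box ε) := measure_mono hsub
        _ = ∑' ε : Fin K → Bool, μ (Box ε) := measure_iUnion hdisj hBoxmeas
        _ = ∑ ε : Fin K → Bool, μ (Box ε) := tsum_fintype _
        _ = ∑ ε : Fin K → Bool, ∏ k : Fin K,
            (fun b => (if b = true then μ₀ E else μ₀ Eᶜ) *
              (if b = true then μ₀ E else μ₀ Eᶜ)) (ε k) :=
            Finset.sum_congr rfl fun ε _ => hμBox ε
        _ = (∑ b : Bool, (if b = true then μ₀ E else μ₀ Eᶜ) *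
              (if b = true then μ₀ E else μ₀ Eᶜ)) ^ K :=
            sum_prod_fin_bool K (fun b => (if b = true then μ₀ E else μ₀ Eᶜ) *
              (if b = true then μ₀ E else μ₀ Eᶜ))
        _ = (μ₀ E * μ₀ E + μ₀ Eᶜ * μ₀ Eᶜ) ^ K := by
            congr 1
            simp [add_comm]
    have hc : μ₀ E * μ₀ E + μ₀ Eᶜ * μ₀ Eᶜ < 1 := by
      have h1 : μ₀ E * μ₀ E < μ₀ E := by
        calc μ₀ E * μ₀ E < μ₀ E * 1 := by
              rw [ENNReal.mul_lt_mul_iff_right (ne_of_gt hm0) (measure_ne_top μ₀ E)]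
              exact hm1
          _ = μ₀ E := mul_one _
      have h2 : μ₀ Eᶜ * μ₀ Eᶜ ≤ 1 - μ₀ E := by
        rw [hEc]
        calc (1 - μ₀ E) * (1 - μ₀ E) ≤ (1 - μ₀ E) * 1 := mul_le_mul_right tsub_le_self _
          _ = 1 - μ₀ E := mul_one _
      calc μ₀ E * μ₀ E + μ₀ Eᶜ * μ₀ Eᶜ ≤ μ₀ E * μ₀ E + (1 - μ₀ E) := add_le_add_right h2 _
        _ < μ₀ E + (1 - μ₀ E) :=
            ENNReal.add_lt_add_right (ne_top_of_le_ne_top ENNReal.one_ne_top tsub_le_self) h1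
        _ = 1 := add_tsub_cancel_of_le hm1.le
    refine le_antisymm ?_ zero_le
    exact ge_of_tendsto' (ENNReal.tendsto_pow_atTop_nhds_zero_of_lt_one hc) hbound
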